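/- If G is an (ι,q)-critical graph, then q ≤ |E(G)| − 1. -/

import Mathlib

open SimpleGraph Finset

/-- `v` lies in the closed neighbourhood of the set `D`. -/
def inClosedNbhd {V : Type*} (G : SimpleGraph V) (D : Set V) (v : V) : Prop :=
  ∃ d ∈ D, d = v ∨ G.Adj d v

/-- `D` is an isolating set of `G`: the graph induced on the vertices outside
`N[D]` has no edges. -/
def IsIsolating {V : Type*} (G : SimpleGraph V) (D : Set V) : Prop :=
  ∀ u v : V, G.Adj u v → inClosedNbhd G D u ∨ inClosedNbhd G D v

/-- The isolation number of a finite graph. -/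
noncomputable def iso {V : Type*} (G : SimpleGraph V) [Fintype V] : ℕ :=
  sInf {n | ∃ D : Finset V, D.card = n ∧ IsIsolating G ↑D}

/-- The graph obtained from `G` by subdividing each edge in `A` once; the new
(subdivision) vertices are the elements of `A`. -/
def subdivide {V : Type*} (G : SimpleGraph V) (A : Finset (Sym2 V)) :
    SimpleGraph (V ⊕ {e : Sym2 V // e ∈ A}) where
  Adj x y :=
    match x, y with
    | Sum.inl u, Sum.inl v => G.Adj u v ∧ s(u, v) ∉ A
    | Sum.inl u, Sum.inr e => u ∈ (e : Sym2 V)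
    | Sum.inr e, Sum.inl u => u ∈ (e : Sym2 V)
    | Sum.inr _, Sum.inr _ => False
  symm := by
    constructor
    rintro (u | e) (v | f) h <;> dsimp only at h ⊢ <;>
      first
        | exact ⟨h.1.symm, by rw [Sym2.eq_swap]; exact h.2⟩
        | exact h
        | exact h.elim
  loopless := by
    constructor
    rintro (u | e) h <;> dsimp only at h <;>
      first
        | exact G.irrefl h.1
        | exact h

/-- A graph is `(ι,q)`-critical. -/
def IotaCritical {V : Type*} (G : SimpleGraph V) [Fintype V] (q : ℕ) : Prop :=
  (∀ A : Finset (Sym2 V), ↑A ⊆ G.edgeSet → A.card = q →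
      iso G < iso (subdivide G A)) ∧
  (∃ A : Finset (Sym2 V), ↑A ⊆ G.edgeSet ∧ A.card = q - 1 ∧
      iso (subdivide G A) = iso G)

/-- `G` is a star, i.e. isomorphic to `K_{1,k}` for some `k ≥ 0`. -/
def IsStar {V : Type*} (G : SimpleGraph V) : Prop :=
  ∃ k : ℕ, Nonempty (G ≃g completeBipartiteGraph Unit (Fin k))

section Helpers

variable {V : Type*} {G : SimpleGraph V}

lemma cn_self {D : Finset V} {x : V} (h : x ∈ D) : inClosedNbhd G ↑D x :=
  ⟨x, by simpa using h, Or.inl rfl⟩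

lemma cn_adj {D : Finset V} {d x : V} (h : d ∈ D) (ha : G.Adj d x) : inClosedNbhd G ↑D x :=
  ⟨d, by simpa using h, Or.inr ha⟩

lemma not_cn {D : Finset V} {x : V} (h : ¬ inClosedNbhd G ↑D x) :
    x ∉ D ∧ ∀ d ∈ D, ¬ G.Adj d x := by
  constructor
  · intro hx; exact h (cn_self hx)
  · intro d hd ha; exact h (cn_adj hd ha)

lemma not_isolating {X : Set V} (h : ¬ IsIsolating G X) :
    ∃ p q, G.Adj p q ∧ ¬ inClosedNbhd G X p ∧ ¬ inClosedNbhd G X q := by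
  unfold IsIsolating at h
  push_neg at h
  obtain ⟨p, q, h1, h2, h3⟩ := h
  exact ⟨p, q, h1, h2, h3⟩

lemma iso_le {V : Type*} [Fintype V] (G : SimpleGraph V) (D : Finset V)
    (h : IsIsolating G ↑D) : iso G ≤ D.card :=
  Nat.sInf_le ⟨D, rfl, h⟩

lemma exists_iso_set (V : Type*) [Fintype V] (G : SimpleGraph V) :
    ∃ D : Finset V, D.card = iso G ∧ IsIsolating G ↑D := by
  have hne : {n | ∃ D : Finset V, D.card = n ∧ IsIsolating G ↑D}.Nonempty := by
    refine ⟨(Finset.univ : Finset V).card, Finset.univ, rfl, ?_⟩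
    intro u v _
    exact Or.inl (cn_self (Finset.mem_univ u))
  exact Nat.sInf_mem hne

lemma walk_closed {P : V → Prop} (hP : ∀ a b, P a → G.Adj a b → P b) :
    ∀ {a b : V}, G.Walk a b → P a → P b := by
  intro a b w
  induction w with
  | nil => exact id
  | cons h p ih => intro ha; exact ih (hP _ _ ha h)

lemma all_of_closed (hconn : G.Connected) {P : V → Prop}
    (hP : ∀ a b, P a → G.Adj a b → P b) {v : V} (hv : P v) : ∀ u, P u := by
  intro u
  obtain ⟨w⟩ := hconn.preconnected v u
  exact walk_closed hP w hv

lemma mem_mem_edge {e : Sym2 V} {p x : V} (he : e ∈ G.edgeSet) (hp : p ∈ e) (hx : x ∈ e) :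
    p = x ∨ G.Adj p x := by
  induction e using Sym2.ind with
  | _ a b =>
    rw [Sym2.mem_iff] at hp hx
    rw [SimpleGraph.mem_edgeSet] at he
    rcases hp with rfl | rfl <;> rcases hx with rfl | rfl
    · exact Or.inl rfl
    · exact Or.inr he
    · exact Or.inr he.symm
    · exact Or.inl rfl

lemma edge_out_fst {e : Sym2 V} : e.out.1 ∈ e := Sym2.out_fst_mem e

/-- If all edges pass through `v` and `G` is connected then `G` is a star. -/
lemma isStar_of_center [Fintype V] (hconn : G.Connected) (v : V)
    (h2 : ∀ p q, G.Adj p q → p = v ∨ q = v) : IsStar G := by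
  classical
  have h1 : ∀ u, u ≠ v → G.Adj v u := by
    have hall : ∀ u, u = v ∨ G.Adj v u := by
      refine all_of_closed hconn (P := fun w => w = v ∨ G.Adj v w) ?_ (Or.inl rfl)
      intro a b ha hab
      rcases ha with rfl | ha
      · exact Or.inr hab
      · rcases h2 a b hab with rfl | rfl
        · exact Or.inr hab
        · exact Or.inl rfl
    intro u hu
    rcases hall u with rfl | h
    · exact absurd rfl hu
    · exact h
  set k := Fintype.card {u : V // u ≠ v} with hk
  let eF : {u : V // u ≠ v} ≃ Fin k := Fintype.equivFin _
  refine ⟨k, ⟨?_⟩⟩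
  refine ⟨⟨fun a => if h : a = v then Sum.inl () else Sum.inr (eF ⟨a, h⟩),
    Sum.elim (fun _ => v) (fun i => (eF.symm i).1), ?_, ?_⟩, ?_⟩
  · intro a
    by_cases h : a = v
    · simp [h]
    · simp [h]
  · intro x
    rcases x with _ | i
    · simp
    · have hne : (eF.symm i).1 ≠ v := (eF.symm i).2
      simp [hne, Subtype.coe_eta]
  · intro a b
    simp only [Equiv.coe_fn_mk, completeBipartiteGraph_adj]
    by_cases ha : a = v <;> by_cases hb : b = v
    · subst ha; subst hb; simp
    · subst ha
      simp only [dif_pos rfl, dif_neg hb]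
      simp [h1 b hb, G.adj_comm]
    · subst hb
      simp only [dif_pos rfl, dif_neg ha]
      simp [(h1 a ha).symm]
    · simp only [dif_neg ha, dif_neg hb]
      constructor
      · intro h; simp at h
      · intro h
        rcases h2 a b h with rfl | rfl
        · exact absurd rfl ha
        · exact absurd rfl hb

end Helpers

section Cover

variable {V : Type*} [Fintype V] {G : SimpleGraph V}

lemma cover_lemma (hconn : G.Connected) (hstar : ¬ IsStar G) (C : Finset V)
    (hcov : ∀ p q, G.Adj p q → p ∈ C ∨ q ∈ C) :
    ∃ D : Finset V, IsIsolating G ↑D ∧ D.card + 1 ≤ C.card := by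
  classical
  by_cases hex : ∃ v ∈ C, IsIsolating G ↑(C.erase v)
  · obtain ⟨v, hv, hiso⟩ := hex
    exact ⟨C.erase v, hiso, by rw [Finset.card_erase_add_one hv]⟩
  · push_neg at hex
    -- independence of C
    have hind : ∀ c ∈ C, ∀ c' ∈ C, ¬ G.Adj c' c := by
      intro c hc c' hc' hadj
      obtain ⟨p, q, hpq, hnp, hnq⟩ := not_isolating (hex c hc)
      have hkey : ∀ x, ¬ inClosedNbhd G ↑(C.erase c) x → x ∈ C → x = c := by
        intro x hx hxC
        by_contra hne
        exact (not_cn hx).1 (Finset.mem_erase.2 ⟨hne, hxC⟩)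
      have hc'ne : c' ≠ c := by rintro rfl; exact G.loopless.irrefl c' hadj
      have hc'er : c' ∈ C.erase c := Finset.mem_erase.2 ⟨hc'ne, hc'⟩
      rcases hcov p q hpq with hp | hq
      · have hp' := hkey p hnp hp
        subst hp'
        exact (not_cn hnp).2 c' hc'er hadj
      · have hq' := hkey q hnq hq
        subst hq'
        exact (not_cn hnq).2 c' hc'er hadj
    by_cases hC2 : ∃ v₁ ∈ C, ∃ v₂ ∈ C, v₁ ≠ v₂
    · obtain ⟨v₁, hv₁, v₂, hv₂, hne⟩ := hC2
      by_cases hx2 : ∃ x, x ∉ C ∧ ∃ w₁ ∈ C, ∃ w₂ ∈ C, w₁ ≠ w₂ ∧ G.Adj x w₁ ∧ G.Adj x w₂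
      · obtain ⟨x, hxC, w₁, hw₁, w₂, hw₂, hwne, ha1, ha2⟩ := hx2
        refine ⟨insert x ((C.erase w₁).erase w₂), ?_, ?_⟩
        · intro p q hpq
          by_contra hcon
          rw [not_or] at hcon
          obtain ⟨hnp, hnq⟩ := hcon
          have hkey : ∀ y, ¬ inClosedNbhd G ↑(insert x ((C.erase w₁).erase w₂)) y →
              y ∉ C := by
            intro y hy hyC
            by_cases h1 : y = w₁
            · subst h1
              exact (not_cn hy).2 x (Finset.mem_insert_self _ _) ha1
            · by_cases h2 : y = w₂
              · subst h2
                exact (not_cn hy).2 x (Finset.mem_insert_self _ _) ha2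
              · exact (not_cn hy).1 (Finset.mem_insert_of_mem
                  (Finset.mem_erase.2 ⟨h2, Finset.mem_erase.2 ⟨h1, hyC⟩⟩))
          rcases hcov p q hpq with h | h
          · exact hkey p hnp h
          · exact hkey q hnq h
        · have hw2e : w₂ ∈ C.erase w₁ := Finset.mem_erase.2 ⟨hwne.symm, hw₂⟩
          have hxe : x ∉ (C.erase w₁).erase w₂ := fun h =>
            hxC (Finset.mem_of_mem_erase (Finset.mem_of_mem_erase h))
          rw [Finset.card_insert_of_notMem hxe, Finset.card_erase_of_mem hw2e,
            Finset.card_erase_of_mem hw₁]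
          have : 2 ≤ C.card := Finset.one_lt_card.2 ⟨v₁, hv₁, v₂, hv₂, hne⟩
          omega
      · exfalso
        push_neg at hx2
        have hclosed : ∀ a b, (a = v₁ ∨ (a ∉ C ∧ G.Adj v₁ a)) → G.Adj a b →
            (b = v₁ ∨ (b ∉ C ∧ G.Adj v₁ b)) := by
          intro a b ha hab
          rcases ha with rfl | ⟨haC, hva⟩
          · exact Or.inr ⟨fun hbC => hind b hbC a hv₁ hab, hab⟩
          · rcases hcov a b hab with h | h
            · exact absurd h haC
            · by_cases hbv : b = v₁
              · exact Or.inl hbv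
              · exact absurd hab (hx2 a haC v₁ hv₁ b h (fun hh => hbv hh.symm) hva.symm)
        have := all_of_closed hconn hclosed (Or.inl rfl : v₁ = v₁ ∨ (v₁ ∉ C ∧ G.Adj v₁ v₁)) v₂
        rcases this with h | ⟨h, _⟩
        · exact hne h.symm
        · exact h hv₂
    · exfalso
      push_neg at hC2
      rcases Finset.eq_empty_or_nonempty C with rfl | ⟨c, hc⟩
      · obtain ⟨v⟩ := hconn.nonempty
        refine hstar (isStar_of_center hconn v ?_)
        intro p q hpq
        rcases hcov p q hpq with h | h <;> exact absurd h (Finset.notMem_empty _)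
      · refine hstar (isStar_of_center hconn c ?_)
        intro p q hpq
        rcases hcov p q hpq with h | h
        · exact Or.inl (hC2 p h c hc)
        · exact Or.inr (hC2 q h c hc)

end Cover
section KeyHelpers

variable {V : Type*} {G : SimpleGraph V}

@[simp] lemma subdivide_adj_inl_inl {A : Finset (Sym2 V)} {u v : V} :
    (subdivide G A).Adj (Sum.inl u) (Sum.inl v) ↔ G.Adj u v ∧ s(u, v) ∉ A := Iff.rfl

@[simp] lemma subdivide_adj_inl_inr {A : Finset (Sym2 V)} {u : V} {e : {e : Sym2 V // e ∈ A}} :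
    (subdivide G A).Adj (Sum.inl u) (Sum.inr e) ↔ u ∈ (e : Sym2 V) := Iff.rfl

@[simp] lemma subdivide_adj_inr_inl {A : Finset (Sym2 V)} {u : V} {e : {e : Sym2 V // e ∈ A}} :
    (subdivide G A).Adj (Sum.inr e) (Sum.inl u) ↔ u ∈ (e : Sym2 V) := Iff.rfl

@[simp] lemma subdivide_adj_inr_inr {A : Finset (Sym2 V)} {e f : {e : Sym2 V // e ∈ A}} :
    (subdivide G A).Adj (Sum.inr e) (Sum.inr f) ↔ False := Iff.rfl

lemma three_mem {e : Sym2 V} {x y z : V} (hx : x ∈ e) (hy : y ∈ e) (hz : z ∈ e) :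
    x = y ∨ x = z ∨ y = z := by
  induction e using Sym2.ind with
  | _ a b =>
    rw [Sym2.mem_iff] at hx hy hz
    rcases hx with rfl | rfl <;> rcases hy with rfl | rfl <;> rcases hz with rfl | rfl <;> tauto

lemma edge_repr {e : Sym2 V} (he : e ∈ G.edgeSet) : ∃ u v, G.Adj u v ∧ e = s(u, v) := by
  induction e using Sym2.ind with
  | _ a b => exact ⟨a, b, he, rfl⟩

end KeyHelpers

lemma key {V : Type*} [Fintype V] (G : SimpleGraph V) (hconn : G.Connected)
    (hstar : ¬ IsStar G) (A : Finset (Sym2 V)) (hAE : ↑A ⊆ G.edgeSet)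
    (hone : ∀ e ∈ G.edgeSet, ∀ f ∈ G.edgeSet, e ∉ A → f ∉ A → e = f) :
    iso G < iso (subdivide G A) := by
  classical
  obtain ⟨D, hDcard, hDiso⟩ := exists_iso_set _ (subdivide G A)
  set S : Finset V := Finset.univ.filter (fun x => Sum.inl x ∈ D) with hSdef
  have hSmem : ∀ x : V, x ∈ S ↔ Sum.inl x ∈ D := by
    intro x; simp [hSdef]
  set TE : Finset (Sym2 V) :=
    (D.filter (fun d => d.isRight = true)).image
      (Sum.elim (fun v => s(v, v)) (fun (e : {e : Sym2 V // e ∈ A}) => e.val)) with hTEdef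
  have hTEmem : ∀ g : Sym2 V, g ∈ TE ↔ ∃ h : g ∈ A, Sum.inr ⟨g, h⟩ ∈ D := by
    intro g
    constructor
    · intro hg
      obtain ⟨d, hd, hfd⟩ := Finset.mem_image.1 hg
      obtain ⟨hdD, hdr⟩ := Finset.mem_filter.1 hd
      cases d with
      | inl w => simp at hdr
      | inr e =>
        simp only [Sum.elim_inr] at hfd
        subst hfd
        exact ⟨e.2, hdD⟩
    · rintro ⟨h, hmem⟩
      exact Finset.mem_image.2 ⟨Sum.inr ⟨g, h⟩, Finset.mem_filter.2 ⟨hmem, rfl⟩, rfl⟩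
  have hTEA : ∀ g ∈ TE, g ∈ A := fun g hg => ((hTEmem g).1 hg).fst
  have hTEedge : ∀ g ∈ TE, g ∈ G.edgeSet := fun g hg => hAE (hTEA g hg)
  have hcardST : S.card + TE.card ≤ D.card := by
    have h1 : (S.image (Sum.inl : V → V ⊕ {e : Sym2 V // e ∈ A})) ⊆ D.filter (fun d => ¬ d.isRight = true) := by
      intro d hd
      obtain ⟨s, hs, rfl⟩ := Finset.mem_image.1 hd
      exact Finset.mem_filter.2 ⟨(hSmem s).1 hs, by simp⟩
    have h2 : S.card = (S.image (Sum.inl : V → V ⊕ {e : Sym2 V // e ∈ A})).card :=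
      (Finset.card_image_of_injective _ Sum.inl_injective).symm
    have h3 : TE.card ≤ (D.filter (fun d => d.isRight = true)).card := Finset.card_image_le
    have h4 := Finset.card_filter_add_card_filter_not
      (s := D) (p := fun d => d.isRight = true)
    have h5 := Finset.card_le_card h1
    omega
  set Cov : V → Prop := fun x => x ∈ S ∨ (∃ e ∈ TE, x ∈ e) ∨ ∃ s ∈ S, G.Adj s x ∧ s(s, x) ∉ A
    with hCovdef
  have hCov : ∀ x : V, inClosedNbhd (subdivide G A) ↑D (Sum.inl x) → Cov x := by
    rintro x ⟨d, hd, heq | hadj⟩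
    · cases d with
      | inl s =>
        have : s = x := Sum.inl_injective heq
        subst this
        exact Or.inl ((hSmem s).2 (by simpa using hd))
      | inr e => exact absurd heq (by simp)
    · cases d with
      | inl s =>
        rw [subdivide_adj_inl_inl] at hadj
        exact Or.inr (Or.inr ⟨s, (hSmem s).2 (by simpa using hd), hadj.1, hadj.2⟩)
      | inr e =>
        rw [subdivide_adj_inr_inl] at hadj
        exact Or.inr (Or.inl ⟨e.val, (hTEmem e.val).2 ⟨e.2, by simpa using hd⟩, hadj⟩)
  have hP1 : ∀ x y, G.Adj x y → ∀ h : s(x, y) ∈ A,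
      Cov x ∨ x ∈ S ∨ y ∈ S ∨ s(x, y) ∈ TE := by
    intro x y hxy hA'
    have hHadj : (subdivide G A).Adj (Sum.inl x) (Sum.inr ⟨s(x, y), hA'⟩) := by
      rw [subdivide_adj_inl_inr]
      exact Sym2.mem_mk_left x y
    rcases hDiso _ _ hHadj with hc | hw
    · exact Or.inl (hCov x hc)
    · obtain ⟨d, hd, heq | hadj⟩ := hw
      · cases d with
        | inl s => exact absurd heq (by simp)
        | inr e =>
          right; right; right
          have : e = ⟨s(x, y), hA'⟩ := Sum.inr_injective heq
          subst this
          exact (hTEmem _).2 ⟨hA', by simpa using hd⟩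
      · cases d with
        | inl s =>
          rw [subdivide_adj_inl_inr] at hadj
          rcases Sym2.mem_iff.1 hadj with rfl | rfl
          · exact Or.inr (Or.inl ((hSmem _).2 (by simpa using hd)))
          · exact Or.inr (Or.inr (Or.inl ((hSmem _).2 (by simpa using hd))))
        | inr e => exact absurd hadj (by simp)
  have hP2 : ∀ x y, G.Adj x y → s(x, y) ∉ A → Cov x ∨ Cov y := by
    intro x y hxy hnA
    have hHadj : (subdivide G A).Adj (Sum.inl x) (Sum.inl y) := ⟨hxy, hnA⟩
    rcases hDiso _ _ hHadj with hc | hc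
    · exact Or.inl (hCov x hc)
    · exact Or.inr (hCov y hc)
  have hcovered : ∀ (D' : Finset V) (x : V), ¬ inClosedNbhd G ↑D' x →
      ∀ e ∈ TE, (∃ d ∈ D', d ∈ e) → x ∉ e := by
    rintro D' x hx e he ⟨d, hd, hde⟩ hxe
    rcases mem_mem_edge (hTEedge e he) hde hxe with rfl | hadj
    · exact (not_cn hx).1 hd
    · exact (not_cn hx).2 d hd hadj
  suffices hgoal : ∃ D' : Finset V, IsIsolating G ↑D' ∧ D'.card + 1 ≤ S.card + TE.card by
    obtain ⟨D', hiso', hcard'⟩ := hgoal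
    have h1 := iso_le G D' hiso'
    omega
  -- main case analysis
  by_cases hTE0 : TE = ∅
  · -- S is a vertex cover
    have hScov : ∀ p q, G.Adj p q → p ∈ S ∨ q ∈ S := by
      intro p q hpq
      have hTEe : ∀ g, g ∉ TE := fun g hg => by simp [hTE0] at hg
      by_cases hA' : s(p, q) ∈ A
      · rcases hP1 p q hpq hA' with hcv | hs | hs | ht
        · rcases hcv with h | ⟨e, he, _⟩ | ⟨s1, hs1, hadj1, hnA1⟩
          · exact Or.inl h
          · exact absurd he (hTEe e)
          · -- q side
            rcases hP1 q p hpq.symm (by rwa [Sym2.eq_swap]) with hcv' | hs' | hs' | ht'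
            · rcases hcv' with h | ⟨e, he, _⟩ | ⟨s2, hs2, hadj2, hnA2⟩
              · exact Or.inr h
              · exact absurd he (hTEe e)
              · have hedge1 : s(s1, p) ∈ G.edgeSet := hadj1
                have hedge2 : s(s2, q) ∈ G.edgeSet := hadj2
                have := hone _ hedge1 _ hedge2 hnA1 hnA2
                rw [Sym2.eq_iff] at this
                rcases this with ⟨_, rfl⟩ | ⟨rfl, rfl⟩
                · exact absurd rfl hpq.ne
                · exact Or.inr hs1
            · exact Or.inr hs'
            · exact Or.inl hs'
            · exact absurd ht' (hTEe _)
        · exact Or.inl hs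
        · exact Or.inr hs
        · exact absurd ht (hTEe _)
      · rcases hP2 p q hpq hA' with hcv | hcv
        · rcases hcv with h | ⟨e, he, _⟩ | ⟨s1, hs1, hadj1, hnA1⟩
          · exact Or.inl h
          · exact absurd he (hTEe e)
          · have := hone _ hadj1 _ hpq hnA1 hA'
            rw [Sym2.eq_iff] at this
            rcases this with ⟨rfl, rfl⟩ | ⟨rfl, _⟩
            · exact absurd rfl hpq.ne
            · exact Or.inr hs1
        · rcases hcv with h | ⟨e, he, _⟩ | ⟨s1, hs1, hadj1, hnA1⟩
          · exact Or.inr h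
          · exact absurd he (hTEe e)
          · have := hone _ hadj1 _ hpq hnA1 hA'
            rw [Sym2.eq_iff] at this
            rcases this with ⟨rfl, _⟩ | ⟨rfl, rfl⟩
            · exact Or.inl hs1
            · exact absurd rfl hpq.ne.symm
    obtain ⟨D', h1, h2⟩ := cover_lemma hconn hstar S hScov
    exact ⟨D', h1, by simp [hTE0] at h2 ⊢; omega⟩
  · -- TE nonempty
    by_cases hZ : ∃ e ∈ TE, ∃ u v z : V, e = s(u, v) ∧ G.Adj u v ∧
        (z ∈ S ∨ ∃ e' ∈ TE.erase e, z ∈ e') ∧ (z = u ∨ G.Adj z u)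
    · obtain ⟨estar, hestar, u, v, z, hesuv, hadjuv, hzmem, hzu⟩ := hZ
      rcases hzmem with hzS | ⟨ez, hez, hzez⟩
      · -- z ∈ S
        have hBcard : (TE.erase estar).card = TE.card - 1 := Finset.card_erase_of_mem hestar
        have hTEpos : 1 ≤ TE.card := Finset.card_pos.2 ⟨estar, hestar⟩
        set D₁ : Finset V := S ∪ (TE.erase estar).image (fun e => e.out.1) with hD₁def
        have hScD₁ : ∀ s ∈ S, s ∈ D₁ := fun s hs => Finset.mem_union_left _ hs
        have hzD₁ : z ∈ D₁ := hScD₁ z hzS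
        have hcov₁ : ∀ e ∈ TE.erase estar, ∃ d ∈ D₁, d ∈ e := fun e he =>
          ⟨e.out.1, Finset.mem_union_right _ (Finset.mem_image_of_mem _ he),
            Sym2.out_fst_mem e⟩
        have hucn : inClosedNbhd G ↑D₁ u := by
          rcases hzu with rfl | h
          · exact cn_self hzD₁
          · exact cn_adj hzD₁ h
        by_cases hiso₁ : IsIsolating G ↑D₁
        · refine ⟨D₁, hiso₁, ?_⟩
          have hc1 : D₁.card ≤ S.card + (TE.erase estar).card := by
            rw [hD₁def]
            exact (Finset.card_union_le _ _).trans
              (Nat.add_le_add_left Finset.card_image_le _)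
          omega
        · obtain ⟨p, q, hpq, hnp, hnq⟩ := not_isolating hiso₁
          have hfact : ∀ x, ¬ inClosedNbhd G ↑D₁ x →
              x ∉ S ∧ (∀ s ∈ S, ¬ G.Adj s x) ∧ x ≠ u ∧
                (∀ e ∈ TE.erase estar, x ∉ e) ∧ (Cov x → x = v) := by
            intro x hx
            have h1 : x ∉ S := fun h => (not_cn hx).1 (hScD₁ x h)
            have h2 : ∀ s ∈ S, ¬ G.Adj s x := fun s hs => (not_cn hx).2 s (hScD₁ s hs)
            have h3 : x ≠ u := fun h => hx (h ▸ hucn)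
            have h4 : ∀ e ∈ TE.erase estar, x ∉ e := fun e he =>
              hcovered D₁ x hx e (Finset.mem_of_mem_erase he) (hcov₁ e he)
            refine ⟨h1, h2, h3, h4, ?_⟩
            rintro (h | ⟨e, he, hxe⟩ | ⟨s, hs, hadj, _⟩)
            · exact absurd h h1
            · by_cases heq : e = estar
              · subst heq
                rw [hesuv, Sym2.mem_iff] at hxe
                rcases hxe with rfl | rfl
                · exact absurd rfl h3
                · rfl
              · exact absurd hxe (h4 e (Finset.mem_erase.2 ⟨heq, he⟩))
            · exact absurd hadj (h2 s hs)
          have hTEdead : ∀ x y, ¬ inClosedNbhd G ↑D₁ x → ¬ inClosedNbhd G ↑D₁ y →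
              G.Adj x y → s(x, y) ∈ TE → False := by
            intro x y hx hy hxy ht
            by_cases heq : s(x, y) = estar
            · rw [hesuv, Sym2.eq_iff] at heq
              rcases heq with ⟨h1, _⟩ | ⟨_, h2⟩
              · exact (hfact x hx).2.2.1 h1
              · exact (hfact y hy).2.2.1 h2
            · exact (hfact x hx).2.2.2.1 _ (Finset.mem_erase.2 ⟨heq, ht⟩)
                (Sym2.mem_mk_left x y)
          have hpv : ∀ x y, ¬ inClosedNbhd G ↑D₁ x → ¬ inClosedNbhd G ↑D₁ y →
              G.Adj x y → s(x, y) ∈ A → x = v := by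
            intro x y hx hy hxy hA'
            rcases hP1 x y hxy hA' with hcv | hs | hs | ht
            · exact (hfact x hx).2.2.2.2 hcv
            · exact absurd hs (hfact x hx).1
            · exact absurd hs (hfact y hy).1
            · exact (hTEdead x y hx hy hxy ht).elim
          have hAbad : s(p, q) ∉ A := by
            intro hA'
            have h1 := hpv p q hnp hnq hpq hA'
            have h2 := hpv q p hnq hnp hpq.symm (by rwa [Sym2.eq_swap])
            exact hpq.ne (h1.trans h2.symm)
          have hvy : ∃ y₁, G.Adj v y₁ ∧ s(v, y₁) ∉ A ∧ ¬ inClosedNbhd G ↑D₁ v := by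
            rcases hP2 p q hpq hAbad with hcv | hcv
            · have hpv' : p = v := (hfact p hnp).2.2.2.2 hcv
              refine ⟨q, ?_, ?_, ?_⟩
              · rw [← hpv']; exact hpq
              · rw [← hpv']; exact hAbad
              · rw [← hpv']; exact hnp
            · have hqv' : q = v := (hfact q hnq).2.2.2.2 hcv
              refine ⟨p, ?_, ?_, ?_⟩
              · rw [← hqv']; exact hpq.symm
              · rw [← hqv', Sym2.eq_swap]; exact hAbad
              · rw [← hqv']; exact hnq
          obtain ⟨y₁, hady₁, hAy₁, hvncn⟩ := hvy
          have hz_ne_v : z ≠ v := fun h => (not_cn hvncn).1 (h ▸ hzD₁)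
          set D₃ : Finset V := insert u ((S.erase z) ∪
            (TE.erase estar).image (fun e => e.out.1)) with hD₃def
          have huD₃ : u ∈ D₃ := Finset.mem_insert_self _ _
          have hcov₃ : ∀ e ∈ TE.erase estar, ∃ d ∈ D₃, d ∈ e := fun e he =>
            ⟨e.out.1, Finset.mem_insert_of_mem
              (Finset.mem_union_right _ (Finset.mem_image_of_mem _ he)),
              Sym2.out_fst_mem e⟩
          refine ⟨D₃, ?_, ?_⟩
          · intro x y hxy
            by_contra hcon
            rw [not_or] at hcon
            obtain ⟨hx, hy⟩ := hcon
            have hfact3 : ∀ w, ¬ inClosedNbhd G ↑D₃ w → w ∉ S ∧ w ≠ u ∧ w ≠ v ∧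
                (∀ e ∈ TE.erase estar, w ∉ e) ∧ ¬ Cov w := by
              intro w hw
              have hwu : w ≠ u := fun h => (not_cn hw).1 (h ▸ huD₃)
              have hwv : w ≠ v := fun h => (not_cn hw).2 u huD₃ (by rw [h]; exact hadjuv)
              have hwS : w ∉ S := by
                intro h
                by_cases hwz : w = z
                · rcases hzu with h' | h'
                  · exact hwu (hwz.trans h')
                  · exact (not_cn hw).2 u huD₃ (by rw [hwz]; exact h'.symm)
                · exact (not_cn hw).1 (Finset.mem_insert_of_mem
                    (Finset.mem_union_left _ (Finset.mem_erase.2 ⟨hwz, h⟩)))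
              have hwB : ∀ e ∈ TE.erase estar, w ∉ e := fun e he =>
                hcovered D₃ w hw e (Finset.mem_of_mem_erase he) (hcov₃ e he)
              refine ⟨hwS, hwu, hwv, hwB, ?_⟩
              rintro (h | ⟨e, he, hwe⟩ | ⟨s, hs, hadjsw, hnA⟩)
              · exact hwS h
              · by_cases heq : e = estar
                · subst heq
                  rw [hesuv, Sym2.mem_iff] at hwe
                  rcases hwe with rfl | rfl
                  · exact hwu rfl
                  · exact hwv rfl
                · exact hwB e (Finset.mem_erase.2 ⟨heq, he⟩) hwe
              · by_cases hsz : s = z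
                · have h5 := hone _ hadjsw _ hady₁ hnA hAy₁
                  rw [Sym2.eq_iff] at h5
                  rcases h5 with ⟨h6, _⟩ | ⟨_, h7⟩
                  · exact hz_ne_v (hsz ▸ h6)
                  · exact hwv h7
                · exact (not_cn hw).2 s (Finset.mem_insert_of_mem
                    (Finset.mem_union_left _ (Finset.mem_erase.2 ⟨hsz, hs⟩))) hadjsw
            obtain ⟨hxS, hxu, hxv, hxB, hxCov⟩ := hfact3 x hx
            obtain ⟨hyS, hyu, hyv, hyB, hyCov⟩ := hfact3 y hy
            by_cases hA' : s(x, y) ∈ A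
            · rcases hP1 x y hxy hA' with hcv | hs | hs | ht
              · exact hxCov hcv
              · exact hxS hs
              · exact hyS hs
              · by_cases heq : s(x, y) = estar
                · rw [hesuv, Sym2.eq_iff] at heq
                  rcases heq with ⟨h1, _⟩ | ⟨_, h2⟩
                  · exact hxu h1
                  · exact hyu h2
                · exact hxB _ (Finset.mem_erase.2 ⟨heq, ht⟩) (Sym2.mem_mk_left x y)
            · have h5 := hone _ hxy _ hady₁ hA' hAy₁
              rw [Sym2.eq_iff] at h5
              rcases h5 with ⟨h6, _⟩ | ⟨_, h7⟩
              · exact hxv h6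
              · exact hyv h7
          · have hSpos : 1 ≤ S.card := Finset.card_pos.2 ⟨z, hzS⟩
            have hc3 : D₃.card ≤ S.card - 1 + (TE.erase estar).card + 1 := by
              rw [hD₃def]
              refine (Finset.card_insert_le _ _).trans (Nat.add_le_add_right ?_ 1)
              refine (Finset.card_union_le _ _).trans ?_
              rw [Finset.card_erase_of_mem hzS]
              exact Nat.add_le_add_left Finset.card_image_le _
            omega
      · -- z ∈ ez ∈ TE.erase estar
        have hezTE : ez ∈ TE := Finset.mem_of_mem_erase hez
        have hez_ne : ez ≠ estar := (Finset.mem_erase.1 hez).1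
        have hTE2 : 2 ≤ TE.card :=
          Finset.one_lt_card.2 ⟨estar, hestar, ez, hezTE, fun h => hez_ne h.symm⟩
        have hBcard : ((TE.erase estar).erase ez).card = TE.card - 2 := by
          rw [Finset.card_erase_of_mem hez, Finset.card_erase_of_mem hestar]
          omega
        set D₁ : Finset V := insert z (S ∪
          ((TE.erase estar).erase ez).image (fun e => e.out.1)) with hD₁def
        have hzD₁ : z ∈ D₁ := Finset.mem_insert_self _ _
        have hScD₁ : ∀ s ∈ S, s ∈ D₁ := fun s hs =>
          Finset.mem_insert_of_mem (Finset.mem_union_left _ hs)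
        have hcov₁ : ∀ e ∈ TE.erase estar, ∃ d ∈ D₁, d ∈ e := by
          intro e he
          by_cases heq : e = ez
          · exact ⟨z, hzD₁, heq ▸ hzez⟩
          · exact ⟨e.out.1, Finset.mem_insert_of_mem (Finset.mem_union_right _
              (Finset.mem_image_of_mem _ (Finset.mem_erase.2 ⟨heq, he⟩))),
              Sym2.out_fst_mem e⟩
        have hucn : inClosedNbhd G ↑D₁ u := by
          rcases hzu with rfl | h
          · exact cn_self hzD₁
          · exact cn_adj hzD₁ h
        by_cases hiso₁ : IsIsolating G ↑D₁
        · refine ⟨D₁, hiso₁, ?_⟩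
          have hc1 : D₁.card ≤ S.card + ((TE.erase estar).erase ez).card + 1 := by
            rw [hD₁def]
            refine (Finset.card_insert_le _ _).trans (Nat.add_le_add_right ?_ 1)
            exact (Finset.card_union_le _ _).trans
              (Nat.add_le_add_left Finset.card_image_le _)
          omega
        · obtain ⟨p, q, hpq, hnp, hnq⟩ := not_isolating hiso₁
          have hfact : ∀ x, ¬ inClosedNbhd G ↑D₁ x →
              x ∉ S ∧ (∀ s ∈ S, ¬ G.Adj s x) ∧ x ≠ u ∧
                (∀ e ∈ TE.erase estar, x ∉ e) ∧ (Cov x → x = v) := by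
            intro x hx
            have h1 : x ∉ S := fun h => (not_cn hx).1 (hScD₁ x h)
            have h2 : ∀ s ∈ S, ¬ G.Adj s x := fun s hs => (not_cn hx).2 s (hScD₁ s hs)
            have h3 : x ≠ u := fun h => hx (h ▸ hucn)
            have h4 : ∀ e ∈ TE.erase estar, x ∉ e := fun e he =>
              hcovered D₁ x hx e (Finset.mem_of_mem_erase he) (hcov₁ e he)
            refine ⟨h1, h2, h3, h4, ?_⟩
            rintro (h | ⟨e, he, hxe⟩ | ⟨s, hs, hadj, _⟩)
            · exact absurd h h1
            · by_cases heq : e = estar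
              · subst heq
                rw [hesuv, Sym2.mem_iff] at hxe
                rcases hxe with rfl | rfl
                · exact absurd rfl h3
                · rfl
              · exact absurd hxe (h4 e (Finset.mem_erase.2 ⟨heq, he⟩))
            · exact absurd hadj (h2 s hs)
          have hTEdead : ∀ x y, ¬ inClosedNbhd G ↑D₁ x → ¬ inClosedNbhd G ↑D₁ y →
              G.Adj x y → s(x, y) ∈ TE → False := by
            intro x y hx hy hxy ht
            by_cases heq : s(x, y) = estar
            · rw [hesuv, Sym2.eq_iff] at heq
              rcases heq with ⟨h1, _⟩ | ⟨_, h2⟩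
              · exact (hfact x hx).2.2.1 h1
              · exact (hfact y hy).2.2.1 h2
            · exact (hfact x hx).2.2.2.1 _ (Finset.mem_erase.2 ⟨heq, ht⟩)
                (Sym2.mem_mk_left x y)
          have hpv : ∀ x y, ¬ inClosedNbhd G ↑D₁ x → ¬ inClosedNbhd G ↑D₁ y →
              G.Adj x y → s(x, y) ∈ A → x = v := by
            intro x y hx hy hxy hA'
            rcases hP1 x y hxy hA' with hcv | hs | hs | ht
            · exact (hfact x hx).2.2.2.2 hcv
            · exact absurd hs (hfact x hx).1
            · exact absurd hs (hfact y hy).1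
            · exact (hTEdead x y hx hy hxy ht).elim
          have hAbad : s(p, q) ∉ A := by
            intro hA'
            have h1 := hpv p q hnp hnq hpq hA'
            have h2 := hpv q p hnq hnp hpq.symm (by rwa [Sym2.eq_swap])
            exact hpq.ne (h1.trans h2.symm)
          have hvy : ∃ y₁, G.Adj v y₁ ∧ s(v, y₁) ∉ A ∧ ¬ inClosedNbhd G ↑D₁ v := by
            rcases hP2 p q hpq hAbad with hcv | hcv
            · have hpv' : p = v := (hfact p hnp).2.2.2.2 hcv
              refine ⟨q, ?_, ?_, ?_⟩
              · rw [← hpv']; exact hpq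
              · rw [← hpv']; exact hAbad
              · rw [← hpv']; exact hnp
            · have hqv' : q = v := (hfact q hnq).2.2.2.2 hcv
              refine ⟨p, ?_, ?_, ?_⟩
              · rw [← hqv']; exact hpq.symm
              · rw [← hqv', Sym2.eq_swap]; exact hAbad
              · rw [← hqv']; exact hnq
          obtain ⟨y₁, hady₁, hAy₁, hvncn⟩ := hvy
          set D₃ : Finset V := insert u (S ∪
            ((TE.erase estar).erase ez).image (fun e => e.out.1)) with hD₃def
          have huD₃ : u ∈ D₃ := Finset.mem_insert_self _ _
          have hScD₃ : ∀ s ∈ S, s ∈ D₃ := fun s hs =>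
            Finset.mem_insert_of_mem (Finset.mem_union_left _ hs)
          have hcov₃ : ∀ e ∈ (TE.erase estar).erase ez, ∃ d ∈ D₃, d ∈ e := fun e he =>
            ⟨e.out.1, Finset.mem_insert_of_mem
              (Finset.mem_union_right _ (Finset.mem_image_of_mem _ he)),
              Sym2.out_fst_mem e⟩
          have hzcn₃ : inClosedNbhd G ↑D₃ z := by
            rcases hzu with rfl | h
            · exact cn_self huD₃
            · exact cn_adj huD₃ h.symm
          refine ⟨D₃, ?_, ?_⟩
          · intro x y hxy
            by_contra hcon
            rw [not_or] at hcon
            obtain ⟨hx, hy⟩ := hcon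
            have hfact3 : ∀ w, ¬ inClosedNbhd G ↑D₃ w → w ∉ S ∧ w ≠ u ∧ w ≠ v ∧ w ≠ z ∧
                (∀ e ∈ (TE.erase estar).erase ez, w ∉ e) ∧ (Cov w → w ∈ ez) := by
              intro w hw
              have hwu : w ≠ u := fun h => (not_cn hw).1 (h ▸ huD₃)
              have hwv : w ≠ v := fun h => (not_cn hw).2 u huD₃ (by rw [h]; exact hadjuv)
              have hwz : w ≠ z := fun h => hw (h ▸ hzcn₃)
              have hwS : w ∉ S := fun h => (not_cn hw).1 (hScD₃ w h)
              have hwB : ∀ e ∈ (TE.erase estar).erase ez, w ∉ e := fun e he =>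
                hcovered D₃ w hw e
                  (Finset.mem_of_mem_erase (Finset.mem_of_mem_erase he)) (hcov₃ e he)
              refine ⟨hwS, hwu, hwv, hwz, hwB, ?_⟩
              rintro (h | ⟨e, he, hwe⟩ | ⟨s, hs, hadjsw, _⟩)
              · exact absurd h hwS
              · by_cases heq : e = estar
                · subst heq
                  rw [hesuv, Sym2.mem_iff] at hwe
                  rcases hwe with rfl | rfl
                  · exact absurd rfl hwu
                  · exact absurd rfl hwv
                · by_cases heq' : e = ez
                  · exact heq' ▸ hwe
                  · exact absurd hwe (hwB e (Finset.mem_erase.2 ⟨heq',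
                      Finset.mem_erase.2 ⟨heq, he⟩⟩))
              · exact absurd hadjsw ((not_cn hw).2 s (hScD₃ s hs))
            obtain ⟨hxS, hxu, hxv, hxz, hxB, hxCov⟩ := hfact3 x hx
            obtain ⟨hyS, hyu, hyv, hyz, hyB, hyCov⟩ := hfact3 y hy
            have hTEd : s(x, y) ∈ TE → False := by
              intro ht
              by_cases h1 : s(x, y) = estar
              · rw [hesuv, Sym2.eq_iff] at h1
                rcases h1 with ⟨h2, _⟩ | ⟨_, h3⟩
                · exact hxu h2
                · exact hyu h3
              · by_cases h2 : s(x, y) = ez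
                · have hx' : x ∈ ez := h2 ▸ Sym2.mem_mk_left x y
                  have hy' : y ∈ ez := h2 ▸ Sym2.mem_mk_right x y
                  rcases three_mem hx' hy' hzez with h | h | h
                  · exact hxy.ne h
                  · exact hxz h
                  · exact hyz h
                · exact hxB _ (Finset.mem_erase.2 ⟨h2, Finset.mem_erase.2 ⟨h1, ht⟩⟩)
                    (Sym2.mem_mk_left x y)
            by_cases hA' : s(x, y) ∈ A
            · have hxez : x ∈ ez := by
                rcases hP1 x y hxy hA' with hcv | hs | hs | ht
                · exact hxCov hcv
                · exact absurd hs hxS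
                · exact absurd hs hyS
                · exact (hTEd ht).elim
              have hyez : y ∈ ez := by
                rcases hP1 y x hxy.symm (by rwa [Sym2.eq_swap]) with hcv | hs | hs | ht
                · exact hyCov hcv
                · exact absurd hs hyS
                · exact absurd hs hxS
                · rw [Sym2.eq_swap] at ht
                  exact (hTEd ht).elim
              rcases three_mem hxez hyez hzez with h | h | h
              · exact hxy.ne h
              · exact hxz h
              · exact hyz h
            · have h5 := hone _ hxy _ hady₁ hA' hAy₁
              rw [Sym2.eq_iff] at h5
              rcases h5 with ⟨h6, _⟩ | ⟨_, h7⟩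
              · exact hxv h6
              · exact hyv h7
          · have hc3 : D₃.card ≤ S.card + ((TE.erase estar).erase ez).card + 1 := by
              rw [hD₃def]
              refine (Finset.card_insert_le _ _).trans (Nat.add_le_add_right ?_ 1)
              exact (Finset.card_union_le _ _).trans
                (Nat.add_le_add_left Finset.card_image_le _)
            omega
    · -- structural case: no subdivided edge has a neighbour in S or other subdivided edges
      have hnZ : ∀ e ∈ TE, ∀ u v z : V, e = s(u, v) → G.Adj u v →
          (z ∈ S ∨ ∃ e' ∈ TE.erase e, z ∈ e') → z ≠ u ∧ ¬ G.Adj z u := by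
        intro e he u v z h1 h2 h3
        constructor
        · intro h4
          exact hZ ⟨e, he, u, v, z, h1, h2, h3, Or.inl h4⟩
        · intro h4
          exact hZ ⟨e, he, u, v, z, h1, h2, h3, Or.inr h4⟩
      obtain ⟨estar, hestar⟩ := Finset.nonempty_of_ne_empty hTE0
      obtain ⟨u0, v0, hadj0, hes0⟩ := edge_repr (hTEedge estar hestar)
      have main3b : ∀ u v x : V, G.Adj u v → estar = s(u, v) → G.Adj u x →
          x ≠ u → x ≠ v →
          ∃ D' : Finset V, IsIsolating G ↑D' ∧ D'.card + 1 ≤ S.card + TE.card := by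
        intro u v x huv hes hux hxu hxv
        have hu_inst : ∀ z, (z ∈ S ∨ ∃ e' ∈ TE.erase estar, z ∈ e') →
            z ≠ u ∧ ¬ G.Adj z u := fun z hz => hnZ estar hestar u v z hes huv hz
        have hv_inst : ∀ z, (z ∈ S ∨ ∃ e' ∈ TE.erase estar, z ∈ e') →
            z ≠ v ∧ ¬ G.Adj z v := fun z hz =>
          hnZ estar hestar v u z (by rw [hes, Sym2.eq_swap]) huv.symm hz
        have hunotS : u ∉ S := fun h => (hu_inst u (Or.inl h)).1 rfl
        have hvnotS : v ∉ S := fun h => (hv_inst v (Or.inl h)).1 rfl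
        have hxnotS : x ∉ S := fun h => (hu_inst x (Or.inl h)).2 hux.symm
        have hSu : ∀ s ∈ S, ¬ G.Adj s u := fun s hs => (hu_inst s (Or.inl hs)).2
        have hSv : ∀ s ∈ S, ¬ G.Adj s v := fun s hs => (hv_inst s (Or.inl hs)).2
        have hBu : ∀ e ∈ TE.erase estar, ∀ w ∈ e, w ≠ u ∧ ¬ G.Adj w u :=
          fun e he w hw => hu_inst w (Or.inr ⟨e, he, hw⟩)
        have hBv : ∀ e ∈ TE.erase estar, ∀ w ∈ e, w ≠ v ∧ ¬ G.Adj w v :=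
          fun e he w hw => hv_inst w (Or.inr ⟨e, he, hw⟩)
        have hxnotB : ∀ e ∈ TE.erase estar, x ∉ e :=
          fun e he hx' => (hBu e he x hx').2 hux.symm
        have hTEpos : 1 ≤ TE.card := Finset.card_pos.2 ⟨estar, hestar⟩
        have hattach : s(u, x) ∉ A ∨ ∃ b ∈ S, G.Adj b x ∧ s(b, x) ∉ A := by
          by_cases hA' : s(u, x) ∈ A
          · right
            have hA'' : s(x, u) ∈ A := by rwa [Sym2.eq_swap]
            rcases hP1 x u hux.symm hA'' with hcv | hs | hs | ht
            · rcases hcv with h | ⟨e, he, hxe⟩ | ⟨s, hs, hadj, hnA⟩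
              · exact absurd h hxnotS
              · by_cases heq : e = estar
                · subst heq
                  rw [hes, Sym2.mem_iff] at hxe
                  rcases hxe with rfl | rfl
                  · exact absurd rfl hxu
                  · exact absurd rfl hxv
                · exact absurd hxe (hxnotB e (Finset.mem_erase.2 ⟨heq, he⟩))
              · exact ⟨s, hs, hadj, hnA⟩
            · exact absurd hs hxnotS
            · exact absurd hs hunotS
            · rw [Sym2.eq_swap] at ht
              by_cases heq : s(u, x) = estar
              · rw [hes, Sym2.eq_iff] at heq
                rcases heq with ⟨_, h⟩ | ⟨h, _⟩
                · exact absurd h hxv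
                · exact absurd h huv.ne
              · exact ((hBu _ (Finset.mem_erase.2 ⟨heq, ht⟩) u
                  (Sym2.mem_mk_left u x)).1 rfl).elim
          · exact Or.inl hA'
        rcases hattach with hE0 | ⟨b, hbS, hbx, hbA⟩
        · -- pendant case: s(u,x) is the unsubdivided edge
          have hE0edge : s(u, x) ∈ G.edgeSet := hux
          have hxv_nadj : ¬ G.Adj x v := by
            intro hadj
            by_cases hA' : s(x, v) ∈ A
            · rcases hP1 x v hadj hA' with hcv | hs | hs | ht
              · rcases hcv with h | ⟨e, he, hxe⟩ | ⟨s, hs, hadjsx, hnA⟩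
                · exact hxnotS h
                · by_cases heq : e = estar
                  · subst heq
                    rw [hes, Sym2.mem_iff] at hxe
                    rcases hxe with rfl | rfl
                    · exact hxu rfl
                    · exact hxv rfl
                  · exact hxnotB e (Finset.mem_erase.2 ⟨heq, he⟩) hxe
                · have h5 := hone _ hadjsx _ hE0edge hnA hE0
                  rw [Sym2.eq_iff] at h5
                  rcases h5 with ⟨h6, _⟩ | ⟨_, h7⟩
                  · exact hunotS (h6 ▸ hs)
                  · exact hxu h7
              · exact hxnotS hs
              · exact hvnotS hs
              · by_cases heq : s(x, v) = estar
                · rw [hes, Sym2.eq_iff] at heq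
                  rcases heq with ⟨h1, _⟩ | ⟨h1, _⟩
                  · exact hxu h1
                  · exact hxv h1
                · exact hxnotB _ (Finset.mem_erase.2 ⟨heq, ht⟩) (Sym2.mem_mk_left x v)
            · have h5 := hone _ hadj _ hE0edge hA' hE0
              rw [Sym2.eq_iff] at h5
              rcases h5 with ⟨h6, _⟩ | ⟨_, h7⟩
              · exact hxu h6
              · exact huv.ne.symm h7
          by_cases hw : ∃ e' ∈ TE.erase estar, ∃ w ∈ e', G.Adj x w
          · obtain ⟨e', he', w, hwe', hxw⟩ := hw
            have he'TE : e' ∈ TE := Finset.mem_of_mem_erase he'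
            have he'ne : e' ≠ estar := (Finset.mem_erase.1 he').1
            have hTE2 : 2 ≤ TE.card :=
              Finset.one_lt_card.2 ⟨estar, hestar, e', he'TE, fun h => he'ne h.symm⟩
            have hBc : ((TE.erase estar).erase e').card = TE.card - 2 := by
              rw [Finset.card_erase_of_mem he', Finset.card_erase_of_mem hestar]
              omega
            set D' : Finset V := insert x (S ∪
              ((TE.erase estar).erase e').image (fun e => e.out.1)) with hD'def
            have hxD' : x ∈ D' := Finset.mem_insert_self _ _
            have hSD' : ∀ s ∈ S, s ∈ D' := fun s hs =>
              Finset.mem_insert_of_mem (Finset.mem_union_left _ hs)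
            have hcovB : ∀ e ∈ (TE.erase estar).erase e', ∃ d ∈ D', d ∈ e := fun e he =>
              ⟨e.out.1, Finset.mem_insert_of_mem
                (Finset.mem_union_right _ (Finset.mem_image_of_mem _ he)),
                Sym2.out_fst_mem e⟩
            refine ⟨D', ?_, ?_⟩
            · intro p q hpq
              by_contra hcon
              rw [not_or] at hcon
              obtain ⟨hp, hq⟩ := hcon
              have hfct : ∀ y, ¬ inClosedNbhd G ↑D' y → y ∉ S ∧ y ≠ u ∧ y ≠ w ∧
                  (∀ e ∈ (TE.erase estar).erase e', y ∉ e) ∧ (Cov y → y ∈ e' ∨ y = v) := by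
                intro y hy
                have h1 : y ∉ S := fun h => (not_cn hy).1 (hSD' _ h)
                have h3 : y ≠ u := fun h => (not_cn hy).2 x hxD' (by rw [h]; exact hux.symm)
                have h4 : y ≠ w := fun h => (not_cn hy).2 x hxD' (by rw [h]; exact hxw)
                have h5 : ∀ e ∈ (TE.erase estar).erase e', y ∉ e := fun e he =>
                  hcovered D' y hy e
                    (Finset.mem_of_mem_erase (Finset.mem_of_mem_erase he)) (hcovB e he)
                refine ⟨h1, h3, h4, h5, ?_⟩
                rintro (h | ⟨e, he, hye⟩ | ⟨s, hs, hadj, _⟩)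
                · exact absurd h h1
                · by_cases heq : e = estar
                  · subst heq
                    rw [hes, Sym2.mem_iff] at hye
                    rcases hye with rfl | rfl
                    · exact absurd rfl h3
                    · exact Or.inr rfl
                  · by_cases heq' : e = e'
                    · subst heq'
                      exact Or.inl hye
                    · exact absurd hye (h5 e (Finset.mem_erase.2 ⟨heq',
                        Finset.mem_erase.2 ⟨heq, he⟩⟩))
                · exact absurd hadj ((not_cn hy).2 s (hSD' s hs))
              obtain ⟨hpS, hpu, hpw, hpB, hpCov⟩ := hfct p hp
              obtain ⟨hqS, hqu, hqw, hqB, hqCov⟩ := hfct q hq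
              by_cases hA' : s(p, q) ∈ A
              · have hTEd : s(p, q) ∈ TE → False := by
                  intro ht
                  by_cases h1 : s(p, q) = estar
                  · rw [hes, Sym2.eq_iff] at h1
                    rcases h1 with ⟨h2, _⟩ | ⟨_, h2⟩
                    · exact hpu h2
                    · exact hqu h2
                  · by_cases h2 : s(p, q) = e'
                    · have hp' : p ∈ e' := h2 ▸ Sym2.mem_mk_left p q
                      have hq' : q ∈ e' := h2 ▸ Sym2.mem_mk_right p q
                      rcases three_mem hp' hq' hwe' with h | h | h
                      · exact hpq.ne h
                      · exact hpw h
                      · exact hqw h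
                    · exact hpB _ (Finset.mem_erase.2 ⟨h2, Finset.mem_erase.2 ⟨h1, ht⟩⟩)
                        (Sym2.mem_mk_left p q)
                have hpE : p ∈ e' ∨ p = v := by
                  rcases hP1 p q hpq hA' with hcv | hs | hs | ht
                  · exact hpCov hcv
                  · exact absurd hs hpS
                  · exact absurd hs hqS
                  · exact (hTEd ht).elim
                have hqE : q ∈ e' ∨ q = v := by
                  rcases hP1 q p hpq.symm (by rwa [Sym2.eq_swap]) with hcv | hs | hs | ht
                  · exact hqCov hcv
                  · exact absurd hs hqS
                  · exact absurd hs hpS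
                  · rw [Sym2.eq_swap] at ht
                    exact (hTEd ht).elim
                rcases hpE with hp' | hp' <;> rcases hqE with hq' | hq'
                · rcases three_mem hp' hq' hwe' with h | h | h
                  · exact hpq.ne h
                  · exact hpw h
                  · exact hqw h
                · exact (hBv e' he' p hp').2 (by rw [← hq']; exact hpq)
                · exact (hBv e' he' q hq').2 (by rw [← hp']; exact hpq.symm)
                · exact hpq.ne (hp'.trans hq'.symm)
              · have h5 := hone _ hpq _ hE0edge hA' hE0
                rw [Sym2.eq_iff] at h5
                rcases h5 with ⟨h6, _⟩ | ⟨_, h7⟩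
                · exact hpu h6
                · exact hqu h7
            · have hc : D'.card ≤ S.card + ((TE.erase estar).erase e').card + 1 := by
                rw [hD'def]
                refine (Finset.card_insert_le _ _).trans (Nat.add_le_add_right ?_ 1)
                exact (Finset.card_union_le _ _).trans
                  (Nat.add_le_add_left Finset.card_image_le _)
              omega
          · -- x has no neighbours among other subdivided edges
            have hNx : ∀ w, G.Adj x w → w ≠ u → w ∈ S := by
              intro w hxw hwu
              by_cases hA' : s(x, w) ∈ A
              · have hA'' : s(w, x) ∈ A := by rwa [Sym2.eq_swap]
                rcases hP1 w x hxw.symm hA'' with hcv | hs | hs | ht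
                · rcases hcv with h | ⟨e, he, hwe⟩ | ⟨s, hs, hadjsw, hnA⟩
                  · exact h
                  · by_cases heq : e = estar
                    · subst heq
                      rw [hes, Sym2.mem_iff] at hwe
                      rcases hwe with rfl | rfl
                      · exact absurd rfl hwu
                      · exact absurd hxw hxv_nadj
                    · exact absurd ⟨e, Finset.mem_erase.2 ⟨heq, he⟩, w, hwe, hxw⟩ hw
                  · have h5 := hone _ hadjsw _ hE0edge hnA hE0
                    rw [Sym2.eq_iff] at h5
                    rcases h5 with ⟨_, h7⟩ | ⟨_, h7⟩
                    · exact absurd (h7 ▸ hxw) (G.loopless.irrefl x)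
                    · exact absurd h7 hwu
                · exact hs
                · exact absurd hs hxnotS
                · rw [Sym2.eq_swap] at ht
                  by_cases heq : s(x, w) = estar
                  · rw [hes, Sym2.eq_iff] at heq
                    rcases heq with ⟨h1, _⟩ | ⟨h1, _⟩
                    · exact absurd h1 hxu
                    · exact absurd h1 hxv
                  · exact absurd ⟨s(x, w), Finset.mem_erase.2 ⟨heq, ht⟩, w,
                      Sym2.mem_mk_right x w, hxw⟩ hw
              · have h5 := hone _ hxw _ hE0edge hA' hE0
                rw [Sym2.eq_iff] at h5
                rcases h5 with ⟨h6, _⟩ | ⟨_, h7⟩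
                · exact absurd h6 hxu
                · exact absurd h7 hwu
            by_cases hz0 : ∃ w, G.Adj x w ∧ w ≠ u
            · obtain ⟨z₀, hxz₀, hz₀u⟩ := hz0
              have hz₀S : z₀ ∈ S := hNx z₀ hxz₀ hz₀u
              have hSpos : 1 ≤ S.card := Finset.card_pos.2 ⟨z₀, hz₀S⟩
              set D' : Finset V := insert x ((S.erase z₀) ∪
                (TE.erase estar).image (fun e => e.out.1)) with hD'def
              have hxD' : x ∈ D' := Finset.mem_insert_self _ _
              have hcovB : ∀ e ∈ TE.erase estar, ∃ d ∈ D', d ∈ e := fun e he =>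
                ⟨e.out.1, Finset.mem_insert_of_mem
                  (Finset.mem_union_right _ (Finset.mem_image_of_mem _ he)),
                  Sym2.out_fst_mem e⟩
              refine ⟨D', ?_, ?_⟩
              · intro p q hpq
                by_contra hcon
                rw [not_or] at hcon
                obtain ⟨hp, hq⟩ := hcon
                have hfct : ∀ y, ¬ inClosedNbhd G ↑D' y → y ∉ S ∧ y ≠ u ∧
                    (∀ e ∈ TE.erase estar, y ∉ e) ∧ (Cov y → y = v) := by
                  intro y hy
                  have h2 : y ≠ x := fun h => (not_cn hy).1 (h ▸ hxD')
                  have h3 : y ≠ u := fun h => (not_cn hy).2 x hxD' (by rw [h]; exact hux.symm)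
                  have hz' : y ≠ z₀ := fun h => (not_cn hy).2 x hxD' (by rw [h]; exact hxz₀)
                  have h1 : y ∉ S := fun h => (not_cn hy).1 (Finset.mem_insert_of_mem
                    (Finset.mem_union_left _ (Finset.mem_erase.2 ⟨hz', h⟩)))
                  have h5 : ∀ e ∈ TE.erase estar, y ∉ e := fun e he =>
                    hcovered D' y hy e (Finset.mem_of_mem_erase he) (hcovB e he)
                  refine ⟨h1, h3, h5, ?_⟩
                  rintro (h | ⟨e, he, hye⟩ | ⟨s, hs, hadjsy, hnA⟩)
                  · exact absurd h h1
                  · by_cases heq : e = estar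
                    · subst heq
                      rw [hes, Sym2.mem_iff] at hye
                      rcases hye with rfl | rfl
                      · exact absurd rfl h3
                      · rfl
                    · exact absurd hye (h5 e (Finset.mem_erase.2 ⟨heq, he⟩))
                  · by_cases hsz : s = z₀
                    · have h6 := hone _ hadjsy _ hE0edge hnA hE0
                      rw [Sym2.eq_iff] at h6
                      rcases h6 with ⟨h7, _⟩ | ⟨h7, _⟩
                      · exact absurd (h7 ▸ hs) hunotS
                      · exact absurd hxz₀ (by rw [hsz.symm.trans h7]; exact G.loopless.irrefl x)
                    · exact absurd hadjsy ((not_cn hy).2 s (Finset.mem_insert_of_mem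
                        (Finset.mem_union_left _ (Finset.mem_erase.2 ⟨hsz, hs⟩))))
                obtain ⟨hpS, hpu, hpB, hpCov⟩ := hfct p hp
                obtain ⟨hqS, hqu, hqB, hqCov⟩ := hfct q hq
                by_cases hA' : s(p, q) ∈ A
                · have hTEd : s(p, q) ∈ TE → False := by
                    intro ht
                    by_cases h1 : s(p, q) = estar
                    · rw [hes, Sym2.eq_iff] at h1
                      rcases h1 with ⟨h2, _⟩ | ⟨_, h2⟩
                      · exact hpu h2
                      · exact hqu h2
                    · exact hpB _ (Finset.mem_erase.2 ⟨h1, ht⟩) (Sym2.mem_mk_left p q)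
                  have hp' : p = v := by
                    rcases hP1 p q hpq hA' with hcv | hs | hs | ht
                    · exact hpCov hcv
                    · exact absurd hs hpS
                    · exact absurd hs hqS
                    · exact (hTEd ht).elim
                  have hq' : q = v := by
                    rcases hP1 q p hpq.symm (by rwa [Sym2.eq_swap]) with hcv | hs | hs | ht
                    · exact hqCov hcv
                    · exact absurd hs hqS
                    · exact absurd hs hpS
                    · rw [Sym2.eq_swap] at ht
                      exact (hTEd ht).elim
                  exact hpq.ne (hp'.trans hq'.symm)
                · have h5 := hone _ hpq _ hE0edge hA' hE0
                  rw [Sym2.eq_iff] at h5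
                  rcases h5 with ⟨h6, _⟩ | ⟨_, h7⟩
                  · exact hpu h6
                  · exact hqu h7
              · have hc : D'.card ≤ (S.card - 1) + (TE.erase estar).card + 1 := by
                  rw [hD'def]
                  refine (Finset.card_insert_le _ _).trans (Nat.add_le_add_right ?_ 1)
                  refine (Finset.card_union_le _ _).trans ?_
                  rw [Finset.card_erase_of_mem hz₀S]
                  exact Nat.add_le_add_left Finset.card_image_le _
                have hBc : (TE.erase estar).card = TE.card - 1 :=
                  Finset.card_erase_of_mem hestar
                omega
            · -- star case
              exfalso
              push_neg at hz0
              have hNu : ∀ w, G.Adj u w → w = v ∨ w = x := by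
                intro w huw
                by_cases hwv : w = v
                · exact Or.inl hwv
                by_cases hwx : w = x
                · exact Or.inr hwx
                exfalso
                by_cases hA' : s(u, w) ∈ A
                · have hA'' : s(w, u) ∈ A := by rwa [Sym2.eq_swap]
                  rcases hP1 w u huw.symm hA'' with hcv | hs | hs | ht
                  · rcases hcv with h | ⟨e, he, hwe⟩ | ⟨s, hs, hadjsw, hnA⟩
                    · exact hSu w h huw.symm
                    · by_cases heq : e = estar
                      · subst heq
                        rw [hes, Sym2.mem_iff] at hwe
                        rcases hwe with h | h
                        · exact G.loopless.irrefl u (h ▸ huw)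
                        · exact hwv h
                      · exact (hBu e (Finset.mem_erase.2 ⟨heq, he⟩) w hwe).2 huw.symm
                    · have h5 := hone _ hadjsw _ hE0edge hnA hE0
                      rw [Sym2.eq_iff] at h5
                      rcases h5 with ⟨h6, _⟩ | ⟨h6, _⟩
                      · exact hunotS (h6 ▸ hs)
                      · exact hxnotS (h6 ▸ hs)
                  · exact hSu w hs huw.symm
                  · exact hunotS hs
                  · rw [Sym2.eq_swap] at ht
                    by_cases heq : s(u, w) = estar
                    · rw [hes, Sym2.eq_iff] at heq
                      rcases heq with ⟨_, h⟩ | ⟨h, _⟩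
                      · exact hwv h
                      · exact huv.ne h
                    · exact (hBu _ (Finset.mem_erase.2 ⟨heq, ht⟩) u
                        (Sym2.mem_mk_left u w)).1 rfl
                · have h5 := hone _ huw _ hE0edge hA' hE0
                  rw [Sym2.eq_iff] at h5
                  rcases h5 with ⟨_, h7⟩ | ⟨h6, _⟩
                  · exact hwx h7
                  · exact hxu h6.symm
              have hNv : ∀ w, G.Adj v w → w = u := by
                intro w hvw
                by_cases hwu : w = u
                · exact hwu
                exfalso
                by_cases hA' : s(v, w) ∈ A
                · have hA'' : s(w, v) ∈ A := by rwa [Sym2.eq_swap]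
                  rcases hP1 w v hvw.symm hA'' with hcv | hs | hs | ht
                  · rcases hcv with h | ⟨e, he, hwe⟩ | ⟨s, hs, hadjsw, hnA⟩
                    · exact hSv w h hvw.symm
                    · by_cases heq : e = estar
                      · subst heq
                        rw [hes, Sym2.mem_iff] at hwe
                        rcases hwe with h | h
                        · exact hwu h
                        · exact G.loopless.irrefl v (h ▸ hvw)
                      · exact (hBv e (Finset.mem_erase.2 ⟨heq, he⟩) w hwe).2 hvw.symm
                    · have h5 := hone _ hadjsw _ hE0edge hnA hE0
                      rw [Sym2.eq_iff] at h5
                      rcases h5 with ⟨h6, _⟩ | ⟨h6, _⟩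
                      · exact hunotS (h6 ▸ hs)
                      · exact hxnotS (h6 ▸ hs)
                  · exact hSv w hs hvw.symm
                  · exact hvnotS hs
                  · rw [Sym2.eq_swap] at ht
                    by_cases heq : s(v, w) = estar
                    · rw [hes, Sym2.eq_iff] at heq
                      rcases heq with ⟨h, _⟩ | ⟨_, h⟩
                      · exact huv.ne h.symm
                      · exact hwu h
                    · exact (hBv _ (Finset.mem_erase.2 ⟨heq, ht⟩) v
                        (Sym2.mem_mk_left v w)).1 rfl
                · have h5 := hone _ hvw _ hE0edge hA' hE0
                  rw [Sym2.eq_iff] at h5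
                  rcases h5 with ⟨h6, _⟩ | ⟨_, h7⟩
                  · exact huv.ne h6.symm
                  · exact hwu h7
              have hclosed : ∀ a c, (a = u ∨ a = v ∨ a = x) → G.Adj a c →
                  (c = u ∨ c = v ∨ c = x) := by
                intro a c ha hac
                rcases ha with rfl | rfl | rfl
                · rcases hNu c hac with h | h
                  · exact Or.inr (Or.inl h)
                  · exact Or.inr (Or.inr h)
                · exact Or.inl (hNv c hac)
                · exact Or.inl (hz0 c hac)
              refine hstar (isStar_of_center hconn u ?_)
              intro p q hpq
              have hall := all_of_closed hconn hclosed
                (Or.inl rfl : u = u ∨ u = v ∨ u = x)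
              rcases hall p with rfl | rfl | rfl
              · exact Or.inl rfl
              · exact Or.inr (hNv q hpq)
              · exact Or.inr (hz0 q hpq)
        · -- X-type attachment
          have hbedge : s(b, x) ∈ G.edgeSet := hbx
          have hSpos : 1 ≤ S.card := Finset.card_pos.2 ⟨b, hbS⟩
          set D' : Finset V := insert x ((S.erase b) ∪
            (TE.erase estar).image (fun e => e.out.1)) with hD'def
          have hxD' : x ∈ D' := Finset.mem_insert_self _ _
          have hcovB : ∀ e ∈ TE.erase estar, ∃ d ∈ D', d ∈ e := fun e he =>
            ⟨e.out.1, Finset.mem_insert_of_mem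
              (Finset.mem_union_right _ (Finset.mem_image_of_mem _ he)),
              Sym2.out_fst_mem e⟩
          refine ⟨D', ?_, ?_⟩
          · intro p q hpq
            by_contra hcon
            rw [not_or] at hcon
            obtain ⟨hp, hq⟩ := hcon
            have hfct : ∀ y, ¬ inClosedNbhd G ↑D' y → y ∉ S ∧ y ≠ u ∧
                (∀ e ∈ TE.erase estar, y ∉ e) ∧ (Cov y → y = v) := by
              intro y hy
              have h2 : y ≠ x := fun h => (not_cn hy).1 (h ▸ hxD')
              have h3 : y ≠ u := fun h => (not_cn hy).2 x hxD' (by rw [h]; exact hux.symm)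
              have hyb : y ≠ b := fun h => (not_cn hy).2 x hxD' (by rw [h]; exact hbx.symm)
              have h1 : y ∉ S := fun h => (not_cn hy).1 (Finset.mem_insert_of_mem
                (Finset.mem_union_left _ (Finset.mem_erase.2 ⟨hyb, h⟩)))
              have h5 : ∀ e ∈ TE.erase estar, y ∉ e := fun e he =>
                hcovered D' y hy e (Finset.mem_of_mem_erase he) (hcovB e he)
              refine ⟨h1, h3, h5, ?_⟩
              rintro (h | ⟨e, he, hye⟩ | ⟨s, hs, hadjsy, hnA⟩)
              · exact absurd h h1
              · by_cases heq : e = estar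
                · subst heq
                  rw [hes, Sym2.mem_iff] at hye
                  rcases hye with rfl | rfl
                  · exact absurd rfl h3
                  · rfl
                · exact absurd hye (h5 e (Finset.mem_erase.2 ⟨heq, he⟩))
              · by_cases hsb : s = b
                · have h6 := hone _ hadjsy _ hbedge hnA hbA
                  rw [Sym2.eq_iff] at h6
                  rcases h6 with ⟨_, h7⟩ | ⟨_, h7⟩
                  · exact absurd h7 h2
                  · exact absurd h7 hyb
                · exact absurd hadjsy ((not_cn hy).2 s (Finset.mem_insert_of_mem
                    (Finset.mem_union_left _ (Finset.mem_erase.2 ⟨hsb, hs⟩))))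
            obtain ⟨hpS, hpu, hpB, hpCov⟩ := hfct p hp
            obtain ⟨hqS, hqu, hqB, hqCov⟩ := hfct q hq
            by_cases hA' : s(p, q) ∈ A
            · have hTEd : s(p, q) ∈ TE → False := by
                intro ht
                by_cases h1 : s(p, q) = estar
                · rw [hes, Sym2.eq_iff] at h1
                  rcases h1 with ⟨h2, _⟩ | ⟨_, h2⟩
                  · exact hpu h2
                  · exact hqu h2
                · exact hpB _ (Finset.mem_erase.2 ⟨h1, ht⟩) (Sym2.mem_mk_left p q)
              have hp' : p = v := by
                rcases hP1 p q hpq hA' with hcv | hs | hs | ht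
                · exact hpCov hcv
                · exact absurd hs hpS
                · exact absurd hs hqS
                · exact (hTEd ht).elim
              have hq' : q = v := by
                rcases hP1 q p hpq.symm (by rwa [Sym2.eq_swap]) with hcv | hs | hs | ht
                · exact hqCov hcv
                · exact absurd hs hqS
                · exact absurd hs hpS
                · rw [Sym2.eq_swap] at ht
                  exact (hTEd ht).elim
              exact hpq.ne (hp'.trans hq'.symm)
            · have h5 := hone _ hpq _ hbedge hA' hbA
              rw [Sym2.eq_iff] at h5
              have hpx : p ≠ x := fun h => (not_cn hp).1 (h ▸ hxD')
              have hqx : q ≠ x := fun h => (not_cn hq).1 (h ▸ hxD')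
              rcases h5 with ⟨_, h7⟩ | ⟨h7, _⟩
              · exact hqx h7
              · exact hpx h7
          · have hc : D'.card ≤ (S.card - 1) + (TE.erase estar).card + 1 := by
              rw [hD'def]
              refine (Finset.card_insert_le _ _).trans (Nat.add_le_add_right ?_ 1)
              refine (Finset.card_union_le _ _).trans ?_
              rw [Finset.card_erase_of_mem hbS]
              exact Nat.add_le_add_left Finset.card_image_le _
            have hBc : (TE.erase estar).card = TE.card - 1 :=
              Finset.card_erase_of_mem hestar
            omega
      by_cases hout : ∃ a c : V, (a = u0 ∨ a = v0) ∧ G.Adj a c ∧ c ≠ u0 ∧ c ≠ v0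
      · obtain ⟨a, c, hac, hadjac, hcu, hcv⟩ := hout
        rcases hac with rfl | rfl
        · exact main3b a v0 c hadj0 hes0 hadjac hcu hcv
        · exact main3b a u0 c hadj0.symm (by rw [hes0, Sym2.eq_swap]) hadjac hcv hcu
      · exfalso
        push_neg at hout
        have hclosed : ∀ a c, (a = u0 ∨ a = v0) → G.Adj a c → (c = u0 ∨ c = v0) := by
          intro a c ha hadj
          by_cases h1 : c = u0
          · exact Or.inl h1
          · exact Or.inr (hout a c ha hadj h1)
        have hall := all_of_closed hconn hclosed (Or.inl rfl : u0 = u0 ∨ u0 = v0)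
        refine hstar (isStar_of_center hconn u0 ?_)
        intro p q hpq
        rcases hall p with rfl | rfl
        · exact Or.inl rfl
        · rcases hall q with rfl | rfl
          · exact Or.inr rfl
          · exact absurd hpq (G.loopless.irrefl _)

theorem stmt11 {V : Type*} [Fintype V] (G : SimpleGraph V) [DecidableRel G.Adj]
    (hconn : G.Connected) (hstar : ¬ IsStar G)
    (q : ℕ) (hq : 1 ≤ q) (hcrit : IotaCritical G q) :
    q ≤ G.edgeFinset.card - 1 := by
  classical
  by_contra hq'
  push_neg at hq'
  obtain ⟨-, A', hA'sub, hA'card, hA'iso⟩ := hcrit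
  have hsub : A' ⊆ G.edgeFinset := by
    intro e he
    exact SimpleGraph.mem_edgeFinset.2 (hA'sub he)
  have hcle : A'.card ≤ G.edgeFinset.card := Finset.card_le_card hsub
  have hone : ∀ e ∈ G.edgeSet, ∀ f ∈ G.edgeSet, e ∉ A' → f ∉ A' → e = f := by
    intro e he f hf hene hfne
    by_contra hne
    have h2 : ({e, f} : Finset (Sym2 V)) ⊆ G.edgeFinset \ A' := by
      intro g hg
      rcases Finset.mem_insert.1 hg with rfl | hg
      · exact Finset.mem_sdiff.2 ⟨SimpleGraph.mem_edgeFinset.2 he, hene⟩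
      · rw [Finset.mem_singleton] at hg
        subst hg
        exact Finset.mem_sdiff.2 ⟨SimpleGraph.mem_edgeFinset.2 hf, hfne⟩
    have h3 := Finset.card_le_card h2
    rw [Finset.card_sdiff_of_subset hsub, Finset.card_pair hne] at h3
    omega
  have := key G hconn hstar A' hA'sub hone
  rw [hA'iso] at this
  exact lt_irrefl _ this
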